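/- Let G be a locally compact Hausdorff group with left Haar measure α acting continuously on the left on a locally compact Hausdorff space X, and let Δ : G × X → ℝ_{>0} be a continuous function satisfying the cocycle identity Δ(ζγ, x) = Δ(ζ, γ·x)·Δ(γ, x) for all ζ, γ ∈ G and x ∈ X. For φ ∈ C_c(G) and f ∈ C_c(X) define (φ·f)(x) = ∫_G φ(γ) f(γ⁻¹·x) Δ(γ, γ⁻¹·x)^{1/2} dα(γ), and define the convolution (φ * φ′)(γ) = ∫_G φ(ζ) φ′(ζ⁻¹γ) dα(ζ). Then for all φ, φ′ ∈ C_c(G) and f ∈ C_c(X), ((φ * φ′)·f)(x) = (φ·(φ′·f))(x) for every x ∈ X. -/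

import Mathlib

open MeasureTheory
open scoped Pointwise

/-- for a locally compact Hausdorff group `G` with left Haar measure `α`
acting continuously on a locally compact Hausdorff space `X`, and a continuous positive
cocycle `Δ` on `G × X`, the action `(φ·f)(x) = ∫ φ(γ) f(γ⁻¹x) Δ(γ, γ⁻¹x)^{1/2} dα(γ)`
of `C_c(G)` on `C_c(X)` is compatible with convolution: `(φ * φ')·f = φ·(φ'·f)`. -/
theorem convolution_action_assoc
    {G X : Type*}
    [Group G] [TopologicalSpace G] [IsTopologicalGroup G]
    [LocallyCompactSpace G] [T2Space G] [MeasurableSpace G] [BorelSpace G]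
    [TopologicalSpace X] [LocallyCompactSpace X] [T2Space X]
    [MulAction G X] [ContinuousSMul G X]
    (α : Measure G) [α.IsHaarMeasure]
    (Δ : G × X → ℝ) (hΔpos : ∀ p, 0 < Δ p) (hΔcont : Continuous Δ)
    (hcocycle : ∀ (ζ γ : G) (x : X), Δ (ζ * γ, x) = Δ (ζ, γ • x) * Δ (γ, x))
    (φ φ' : G → ℂ) (hφ : Continuous φ) (hφc : HasCompactSupport φ)
    (hφ' : Continuous φ') (hφ'c : HasCompactSupport φ')
    (f : X → ℂ) (hf : Continuous f) (hfc : HasCompactSupport f) :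
    ∀ x : X,
      ∫ γ, (∫ ζ, φ ζ * φ' (ζ⁻¹ * γ) ∂α) * f (γ⁻¹ • x)
          * (Real.sqrt (Δ (γ, γ⁻¹ • x)) : ℂ) ∂α
      = ∫ γ, φ γ *
          (∫ ζ, φ' ζ * f (ζ⁻¹ • γ⁻¹ • x)
              * (Real.sqrt (Δ (ζ, ζ⁻¹ • γ⁻¹ • x)) : ℂ) ∂α)
          * (Real.sqrt (Δ (γ, γ⁻¹ • x)) : ℂ) ∂α := by
  intro x
  have hS : IsCompact (tsupport φ) := hφc
  have hS' : IsCompact (tsupport φ') := hφ'c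
  have hK : IsCompact (tsupport φ * tsupport φ') := hS.mul hS'
  set g : G → G → ℂ := fun γ ζ =>
    φ ζ * φ' (ζ⁻¹ * γ) * (f (γ⁻¹ • x) * (Real.sqrt (Δ (γ, γ⁻¹ • x)) : ℂ)) with hg
  -- vanishing of `g` outside the supports
  have hgz1 : ∀ γ ζ, ζ ∉ tsupport φ → g γ ζ = 0 := by
    intro γ ζ h
    simp [hg, image_eq_zero_of_notMem_tsupport h]
  have hgz2 : ∀ γ ζ, γ ∉ tsupport φ * tsupport φ' → g γ ζ = 0 := by
    intro γ ζ h
    by_cases hζ : ζ ∈ tsupport φ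
    · have hm : ζ⁻¹ * γ ∉ tsupport φ' := by
        intro hm
        exact h (by simpa using Set.mul_mem_mul hζ hm)
      simp [hg, image_eq_zero_of_notMem_tsupport hm]
    · exact hgz1 γ ζ hζ
  -- continuity and compact support of the double integrand
  have hgcont : Continuous (Function.uncurry g) := by
    apply Continuous.mul
    · exact (hφ.comp continuous_snd).mul
        (hφ'.comp ((continuous_snd.inv).mul continuous_fst))
    · apply Continuous.mul
      · exact hf.comp ((continuous_fst.inv).smul continuous_const)
      · exact Complex.continuous_ofReal.comp (Real.continuous_sqrt.comp
          (hΔcont.comp (continuous_fst.prodMk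
            ((continuous_fst.inv).smul continuous_const))))
  have hgsupp : HasCompactSupport (Function.uncurry g) := by
    apply HasCompactSupport.intro (hK.prod hS)
    rintro ⟨γ, ζ⟩ hp
    rw [Set.mem_prod] at hp
    push_neg at hp
    by_cases hγ : γ ∈ tsupport φ * tsupport φ'
    · exact hgz1 γ ζ (hp hγ)
    · exact hgz2 γ ζ hγ
  -- the key pointwise identity, using left invariance and the cocycle property
  have key : ∀ ζ : G, (∫ γ, g γ ζ ∂α) =
      φ ζ * (∫ γ, φ' γ * f (γ⁻¹ • ζ⁻¹ • x)
          * (Real.sqrt (Δ (γ, γ⁻¹ • ζ⁻¹ • x)) : ℂ) ∂α)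
        * (Real.sqrt (Δ (ζ, ζ⁻¹ • x)) : ℂ) := by
    intro ζ
    have step : (∫ γ, g γ ζ ∂α) = ∫ γ, g (ζ * γ) ζ ∂α :=
      (integral_mul_left_eq_self (fun γ => g γ ζ) ζ).symm
    rw [step]
    have h1 : ∀ γ : G, g (ζ * γ) ζ =
        φ ζ * ((φ' γ * f (γ⁻¹ • ζ⁻¹ • x)
            * (Real.sqrt (Δ (γ, γ⁻¹ • ζ⁻¹ • x)) : ℂ))
          * (Real.sqrt (Δ (ζ, ζ⁻¹ • x)) : ℂ)) := by
      intro γ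
      have hx1 : (ζ * γ)⁻¹ • x = γ⁻¹ • ζ⁻¹ • x := by rw [mul_inv_rev, mul_smul]
      have hx2 : Δ (ζ * γ, γ⁻¹ • ζ⁻¹ • x)
          = Δ (ζ, ζ⁻¹ • x) * Δ (γ, γ⁻¹ • ζ⁻¹ • x) := by
        rw [hcocycle ζ γ (γ⁻¹ • ζ⁻¹ • x), smul_inv_smul]
      simp only [hg, inv_mul_cancel_left, hx1, hx2]
      rw [Real.sqrt_mul (hΔpos _).le, Complex.ofReal_mul]
      ring
    simp only [h1]
    rw [integral_const_mul, integral_mul_const, mul_assoc]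
  -- now the chain of equalities
  calc
    ∫ γ, (∫ ζ, φ ζ * φ' (ζ⁻¹ * γ) ∂α) * f (γ⁻¹ • x)
        * (Real.sqrt (Δ (γ, γ⁻¹ • x)) : ℂ) ∂α
      = ∫ γ, ∫ ζ, g γ ζ ∂α ∂α := by
        congr 1
        ext γ
        rw [mul_assoc, ← integral_mul_const]
    _ = ∫ ζ, ∫ γ, g γ ζ ∂α ∂α :=
        integral_integral_swap_of_hasCompactSupport hgcont hgsupp
    _ = _ := by simp only [key]
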